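/- For every nonnegative integer n, ∑_{k=0}^{n} ((−4)^k/(k+1))·C(n,k)·H_k = (1/(4(n+1)))·((−1 + 3·(−3)^n)·H_n − 3·(−3)^n·∑_{k=1}^n 1/(k·(−3)^k) + ∑_{k=1}^n (−3)^k/k), as an identity of rational numbers. -/

import Mathlib

open Finset

def harmonicQ (k : ℕ) : ℚ := ∑ i ∈ Finset.Icc 1 k, (1 : ℚ) / i

def AQ (n : ℕ) : ℚ := ∑ k ∈ Finset.Icc 1 n, 1 / ((k:ℚ) * (-3)^k)
def BQ (n : ℕ) : ℚ := ∑ k ∈ Finset.Icc 1 n, (-3:ℚ)^k / k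

lemma harmonicQ_succ (k : ℕ) : harmonicQ (k+1) = harmonicQ k + 1/((k:ℚ)+1) := by
  unfold harmonicQ
  rw [Finset.sum_Icc_succ_top (by omega : 1 ≤ k+1)]
  push_cast; ring

lemma AQ_succ (n : ℕ) : AQ (n+1) = AQ n + 1/(((n:ℚ)+1) * (-3)^(n+1)) := by
  unfold AQ
  rw [Finset.sum_Icc_succ_top (by omega : 1 ≤ n+1)]
  push_cast; ring

lemma BQ_succ (n : ℕ) : BQ (n+1) = BQ n + (-3:ℚ)^(n+1)/((n:ℚ)+1) := by
  unfold BQ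
  rw [Finset.sum_Icc_succ_top (by omega : 1 ≤ n+1)]
  push_cast; ring

lemma binom (m : ℕ) : ∑ k ∈ range (m+1), (-4:ℚ)^k * (m.choose k : ℚ) = (-3)^m := by
  have h := add_pow (-4 : ℚ) 1 m
  simp only [one_pow, mul_one] at h
  norm_num at h
  rw [← h]

lemma Ulem (n : ℕ) : ∑ j ∈ range (n+1), (-4:ℚ)^j * (n.choose j : ℚ) / ((j:ℚ)+1)
    = (1 - (-3:ℚ)^(n+1)) / (4*((n:ℚ)+1)) := by
  have key : ∀ j ∈ range (n+1), (-4:ℚ)^j * (n.choose j : ℚ) / ((j:ℚ)+1)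
      = -(1/(4*((n:ℚ)+1))) * ((-4:ℚ)^(j+1) * (((n+1).choose (j+1) : ℕ) : ℚ)) := by
    intro j _
    have h : ((n:ℚ)+1) * (n.choose j : ℚ) = (((n+1).choose (j+1) : ℕ) : ℚ) * ((j:ℚ)+1) := by
      exact_mod_cast Nat.add_one_mul_choose_eq n j
    have hj : ((j:ℚ)+1) ≠ 0 := by positivity
    have hn : ((n:ℚ)+1) ≠ 0 := by positivity
    field_simp
    ring_nf
    ring_nf at h
    linear_combination (4*(-4:ℚ)^j) * h
  rw [Finset.sum_congr rfl key, ← Finset.mul_sum]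
  have h2 : ∑ j ∈ range (n+1), (-4:ℚ)^(j+1) * (((n+1).choose (j+1) : ℕ) : ℚ)
      = (-3:ℚ)^(n+1) - 1 := by
    have h3 := Finset.sum_range_succ' (fun k => (-4:ℚ)^k * (((n+1).choose k : ℕ) : ℚ)) (n+1)
    rw [binom (n+1)] at h3
    simp only [pow_zero, Nat.choose_zero_right, Nat.cast_one, one_mul] at h3
    linarith
  rw [h2]
  have hn : ((n:ℚ)+1) ≠ 0 := by positivity
  field_simp
  ring

lemma Tlem (n : ℕ) : ∑ k ∈ range (n+1), (-4:ℚ)^k * (n.choose k : ℚ) * harmonicQ k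
    = (-3:ℚ)^n * (harmonicQ n - AQ n) := by
  induction n with
  | zero => simp [harmonicQ, AQ]
  | succ n ih =>
    rw [Finset.sum_range_succ' (fun k => (-4:ℚ)^k * ((n+1).choose k : ℚ) * harmonicQ k) (n+1)]
    have h0 : harmonicQ 0 = 0 := by simp [harmonicQ]
    have key : ∀ i ∈ range (n+1),
        (-4:ℚ)^(i+1) * ((n+1).choose (i+1) : ℚ) * harmonicQ (i+1)
        = (-4) * ((-4:ℚ)^i * (n.choose i : ℚ) * harmonicQ i)
          + (-4) * ((-4:ℚ)^i * (n.choose i : ℚ) / ((i:ℚ)+1))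
          + ((-4:ℚ)^(i+1) * (n.choose (i+1) : ℚ) * harmonicQ (i+1)) := by
      intro i hi
      rw [Nat.choose_succ_succ, harmonicQ_succ]
      have hi1 : ((i:ℚ)+1) ≠ 0 := by positivity
      push_cast
      field_simp
      ring
    rw [Finset.sum_congr rfl key]
    rw [Finset.sum_add_distrib, Finset.sum_add_distrib, ← Finset.mul_sum, ← Finset.mul_sum]
    have hg : ∑ i ∈ range (n+1), (-4:ℚ)^(i+1) * (n.choose (i+1) : ℚ) * harmonicQ (i+1)
        = ∑ k ∈ range (n+1), (-4:ℚ)^k * (n.choose k : ℚ) * harmonicQ k := by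
      have h3 := Finset.sum_range_succ' (fun k => (-4:ℚ)^k * (n.choose k : ℚ) * harmonicQ k) (n+1)
      rw [Finset.sum_range_succ (fun k => (-4:ℚ)^k * (n.choose k : ℚ) * harmonicQ k) (n+1)] at h3
      simp only [Nat.choose_succ_self, Nat.cast_zero, mul_zero, zero_mul, add_zero, h0,
        mul_zero] at h3
      linarith
    rw [hg, ih, Ulem n]
    rw [harmonicQ_succ, AQ_succ]
    simp only [h0, mul_zero, zero_mul, Nat.choose_zero_right, Nat.cast_one, pow_zero, one_mul, add_zero]
    have hn : ((n:ℚ)+1) ≠ 0 := by positivity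
    have h3 : ((-3:ℚ)^(n+1)) ≠ 0 := by positivity
    push_cast
    field_simp
    ring

lemma Slem (n : ℕ) : ∑ k ∈ range (n+1), (-4:ℚ)^k * ((n+1).choose (k+1) : ℚ) * harmonicQ k
    = (1/4) * ((-1 + 3*(-3:ℚ)^n) * harmonicQ n - 3*(-3:ℚ)^n * AQ n + BQ n) := by
  induction n with
  | zero => simp [harmonicQ, AQ, BQ]
  | succ n ih =>
    have key : ∀ k ∈ range (n+2),
        (-4:ℚ)^k * ((n+2).choose (k+1) : ℚ) * harmonicQ k
        = (-4:ℚ)^k * ((n+1).choose k : ℚ) * harmonicQ k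
          + (-4:ℚ)^k * ((n+1).choose (k+1) : ℚ) * harmonicQ k := by
      intro k hk
      rw [Nat.choose_succ_succ (n+1) k]
      push_cast
      ring
    rw [Finset.sum_congr rfl key, Finset.sum_add_distrib]
    have hlast : ∑ k ∈ range (n+2), (-4:ℚ)^k * ((n+1).choose (k+1) : ℚ) * harmonicQ k
        = ∑ k ∈ range (n+1), (-4:ℚ)^k * ((n+1).choose (k+1) : ℚ) * harmonicQ k := by
      rw [Finset.sum_range_succ]
      simp [Nat.choose_succ_self]
    rw [hlast, ih, Tlem (n+1)]
    rw [harmonicQ_succ, AQ_succ, BQ_succ]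
    have hn : ((n:ℚ)+1) ≠ 0 := by positivity
    have h3 : ((-3:ℚ)^(n+1)) ≠ 0 := by positivity
    push_cast
    field_simp
    ring

theorem harmonic_identity_3 (n : ℕ) :
    ∑ k ∈ Finset.range (n + 1), (-4 : ℚ) ^ k / ((k : ℚ) + 1) * (n.choose k : ℚ) * harmonicQ k =
      1 / (4 * ((n : ℚ) + 1)) *
        ((-1 + 3 * (-3 : ℚ) ^ n) * harmonicQ n -
          3 * (-3 : ℚ) ^ n * ∑ k ∈ Finset.Icc 1 n, 1 / ((k : ℚ) * (-3) ^ k) +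
          ∑ k ∈ Finset.Icc 1 n, (-3 : ℚ) ^ k / (k : ℚ)) := by
  have hn : ((n:ℚ)+1) ≠ 0 := by positivity
  have key : ∀ k ∈ range (n+1),
      (-4 : ℚ) ^ k / ((k : ℚ) + 1) * (n.choose k : ℚ) * harmonicQ k
      = (1/((n:ℚ)+1)) * ((-4:ℚ)^k * ((n+1).choose (k+1) : ℚ) * harmonicQ k) := by
    intro k hk
    have h : ((n:ℚ)+1) * (n.choose k : ℚ) = (((n+1).choose (k+1) : ℕ) : ℚ) * ((k:ℚ)+1) := by
      exact_mod_cast Nat.add_one_mul_choose_eq n k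
    have hk1 : ((k:ℚ)+1) ≠ 0 := by positivity
    field_simp
    linear_combination (harmonicQ k) * h
  rw [Finset.sum_congr rfl key, ← Finset.mul_sum, Slem n]
  show _ = 1 / (4 * ((n : ℚ) + 1)) * ((-1 + 3 * (-3 : ℚ) ^ n) * harmonicQ n -
      3 * (-3 : ℚ) ^ n * AQ n + BQ n)
  have h4 : (1:ℚ) / (4 * ((n:ℚ)+1)) = 1/((n:ℚ)+1) * (1/4) := by
    rw [one_div, mul_inv, one_div, one_div]; ring
  rw [h4, mul_assoc]
  ring
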